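/- arXiv:2006.15825 — 3 statements merged into one kernel-verified Lean document; each statement's English description precedes it below -/
import Mathlib

section
/- Let Δ ⊂ ℝ^d be a d-dimensional canonical Fano polytope and let Δ* := {y ∈ ℝ^d : ⟨x,y⟩ ≥ −1 for all x ∈ Δ} be its dual polytope. Then the Fine interior F(Δ) equals {0} if and only if [Δ*] := conv(Δ* ∩ ℤ^d) is also a d-dimensional canonical Fano polytope, i.e. the affine span of [Δ*] is ℝ^d and 0 is the unique point of ℤ^d lying in the interior of [Δ*]. (Proposition 4.6.) -/
/-- `x ∈ ℝ^d` is a lattice point, i.e. all its coordinates are integers. -/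
def IsLatticePt {d : ℕ} (x : Fin d → ℝ) : Prop := ∀ i, ∃ m : ℤ, x i = (m : ℝ)

/-- The standard inner product on `ℝ^d`. -/
noncomputable def dotR {d : ℕ} (x y : Fin d → ℝ) : ℝ := ∑ i, x i * y i

/-- `ord_Δ(n) = min_{x ∈ Δ} ⟨x, n⟩`. -/
noncomputable def ordP {d : ℕ} (Δ : Set (Fin d → ℝ)) (n : Fin d → ℝ) : ℝ :=
  sInf ((fun x => dotR x n) '' Δ)

/-- The Fine interior of `Δ`:
`F(Δ) = {x : ⟨x,n⟩ ≥ ord_Δ(n) + 1 for all n ∈ ℤ^d ∖ {0}}`. -/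
def fineInterior {d : ℕ} (Δ : Set (Fin d → ℝ)) : Set (Fin d → ℝ) :=
  {x | ∀ n : Fin d → ℤ, n ≠ 0 →
    ordP Δ (fun i => (n i : ℝ)) + 1 ≤ dotR x (fun i => (n i : ℝ))}

/-- `Δ ⊂ ℝ^d` is a `d`-dimensional canonical Fano polytope: it is the convex hull of a
finite set of lattice points, its affine span is all of `ℝ^d`, `0` lies in its interior,
and `0` is the only lattice point in its interior. -/
def IsCanonicalFano {d : ℕ} (Δ : Set (Fin d → ℝ)) : Prop :=
  (∃ S : Finset (Fin d → ℤ),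
      Δ = convexHull ℝ ((fun z : Fin d → ℤ => fun i => (z i : ℝ)) '' (S : Set (Fin d → ℤ)))) ∧
  affineSpan ℝ Δ = ⊤ ∧
  (0 : Fin d → ℝ) ∈ interior Δ ∧
  ∀ x ∈ interior Δ, IsLatticePt x → x = 0

lemma dotL_linear {d : ℕ} (n : Fin d → ℝ) : IsLinearMap ℝ (fun x : Fin d → ℝ => dotR x n) := by
  constructor
  · intro x y; simp [dotR, add_mul, Finset.sum_add_distrib]
  · intro c x; simp [dotR, Finset.mul_sum, mul_assoc]

lemma dotRt_linear {d : ℕ} (x : Fin d → ℝ) : IsLinearMap ℝ (fun y : Fin d → ℝ => dotR x y) := by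
  constructor
  · intro a b; simp [dotR, mul_add, Finset.sum_add_distrib]
  · intro c a
    simp only [dotR, Pi.smul_apply, smul_eq_mul, Finset.mul_sum]
    exact Finset.sum_congr rfl fun i _ => by ring

lemma hull_dot_ge {d : ℕ} {A : Set (Fin d → ℝ)} {c : ℝ} {n : Fin d → ℝ}
    (h : ∀ z ∈ A, c ≤ dotR z n) : ∀ x ∈ convexHull ℝ A, c ≤ dotR x n :=
  fun _ hx => convexHull_min h (convex_halfSpace_ge (dotL_linear n) c) hx

lemma hull_dot_ge' {d : ℕ} {A : Set (Fin d → ℝ)} {c : ℝ} {x : Fin d → ℝ}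
    (h : ∀ y ∈ A, c ≤ dotR x y) : ∀ y ∈ convexHull ℝ A, c ≤ dotR x y :=
  fun _ hy => convexHull_min h (convex_halfSpace_ge (dotRt_linear x) c) hy

lemma dot_cast {d : ℕ} (z n : Fin d → ℤ) :
    dotR (fun i => (z i : ℝ)) (fun i => (n i : ℝ)) = ((∑ i, z i * n i : ℤ) : ℝ) := by
  simp [dotR]

lemma ord_facts {d : ℕ} {Δ : Set (Fin d → ℝ)} (S : Finset (Fin d → ℤ))
    (hS : Δ = convexHull ℝ ((fun z : Fin d → ℤ => fun i => (z i : ℝ)) '' (S : Set (Fin d → ℤ))))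
    (h0 : (0 : Fin d → ℝ) ∈ Δ) (n : Fin d → ℤ) :
    ∃ m : ℤ, ordP Δ (fun i => (n i : ℝ)) = (m : ℝ) ∧
      ∀ x ∈ Δ, (m : ℝ) ≤ dotR x (fun i => (n i : ℝ)) := by
  have hSne : S.Nonempty := by
    rcases S.eq_empty_or_nonempty with h | h
    · subst h; simp only [Finset.coe_empty, Set.image_empty, convexHull_empty] at hS
      rw [hS] at h0; exact absurd h0 (Set.notMem_empty _)
    · exact h
  set m := S.inf' hSne (fun z => ∑ i, z i * n i) with hm
  have hlb : ∀ x ∈ Δ, (m : ℝ) ≤ dotR x (fun i => (n i : ℝ)) := by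
    rw [hS]; apply hull_dot_ge
    rintro _ ⟨z, hz, rfl⟩
    rw [dot_cast]
    exact_mod_cast Finset.inf'_le _ hz
  refine ⟨m, le_antisymm ?_ (le_csInf ⟨_, ⟨0, h0, rfl⟩⟩ ?_), hlb⟩
  · obtain ⟨z, hz, hzeq⟩ := Finset.exists_mem_eq_inf' hSne (fun z => ∑ i, z i * n i)
    have hzΔ : (fun i => ((z i : ℝ))) ∈ Δ := by
      rw [hS]; exact subset_convexHull _ _ ⟨z, hz, rfl⟩
    have h1 : ordP Δ (fun i => (n i : ℝ)) ≤ dotR (fun i => (z i : ℝ)) (fun i => (n i : ℝ)) :=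
      csInf_le ⟨(m : ℝ), by rintro r ⟨x, hx, rfl⟩; exact hlb x hx⟩ ⟨_, hzΔ, rfl⟩
    rw [dot_cast] at h1
    rw [hm, hzeq]
    exact_mod_cast h1
  · rintro r ⟨x, hx, rfl⟩; exact hlb x hx

lemma ord_master {d : ℕ} {Δ : Set (Fin d → ℝ)} (S : Finset (Fin d → ℤ))
    (hS : Δ = convexHull ℝ ((fun z : Fin d → ℤ => fun i => (z i : ℝ)) '' (S : Set (Fin d → ℤ))))
    {ε : ℝ} (hε : 0 < ε) (hball : Metric.ball (0 : Fin d → ℝ) ε ⊆ Δ)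
    {n : Fin d → ℤ} (hn : n ≠ 0) :
    ∃ m : ℤ, ordP Δ (fun i => (n i : ℝ)) = (m : ℝ) ∧
      (∀ x ∈ Δ, (m : ℝ) ≤ dotR x (fun i => (n i : ℝ))) ∧
      (m : ℝ) * (∑ i, |(n i : ℝ)|) ≤ -(ε/2) * (∑ i, ((n i : ℝ))^2) ∧
      0 < ∑ i, |(n i : ℝ)| ∧
      (∑ i, |(n i : ℝ)|) ≤ ∑ i, ((n i : ℝ))^2 ∧
      (∑ i, |(n i : ℝ)|)^2 ≤ d * ∑ i, ((n i : ℝ))^2 := by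
  have h0 : (0 : Fin d → ℝ) ∈ Δ := hball (by simp [Metric.mem_ball, hε])
  obtain ⟨m, hord, hlb⟩ := ord_facts S hS h0 n
  set B := ∑ i, |(n i : ℝ)| with hB
  set Q := ∑ i, ((n i : ℝ))^2 with hQ
  obtain ⟨i₀, hi₀⟩ : ∃ i, n i ≠ 0 := by
    by_contra h; push_neg at h; exact hn (funext h)
  have hBpos : 0 < B := by
    apply Finset.sum_pos' (fun i _ => abs_nonneg _)
    exact ⟨i₀, Finset.mem_univ _, by simpa using hi₀⟩
  have hBQ : B ≤ Q := by
    apply Finset.sum_le_sum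
    intro i _
    rcases eq_or_ne (n i) 0 with h | h
    · simp [h]
    · have h1 : (1 : ℝ) ≤ |(n i : ℝ)| := by
        rw [← Int.cast_abs]; exact_mod_cast Int.one_le_abs h
      nlinarith [abs_nonneg ((n i : ℝ)), sq_abs ((n i : ℝ))]
  have hB2 : B^2 ≤ d * Q := by
    have := sq_sum_le_card_mul_sum_sq (s := Finset.univ) (f := fun i => |(n i : ℝ)|)
    simpa [sq_abs] using this
  -- the ball point
  set c : ℝ := ε / (2 * B) with hc
  have hcpos : 0 < c := by positivity
  have hmem : (fun i => -c * (n i : ℝ)) ∈ Δ := by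
    apply hball
    rw [mem_ball_zero_iff]
    have hxe : (fun i => -c * (n i : ℝ)) = (-c) • (fun i => ((n i : ℝ))) := rfl
    rw [hxe, norm_smul]
    have hnorm : ‖(fun i => ((n i : ℝ)))‖ ≤ B := by
      rw [pi_norm_le_iff_of_nonneg hBpos.le]
      intro i
      rw [Real.norm_eq_abs]
      exact Finset.single_le_sum (fun j _ => abs_nonneg ((n j : ℝ))) (Finset.mem_univ i)
    have : |(-c)| * ‖(fun i => ((n i : ℝ)))‖ ≤ c * B := by
      rw [abs_neg, abs_of_pos hcpos]
      exact mul_le_mul_of_nonneg_left hnorm hcpos.le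
    have hcB : c * B = ε / 2 := by rw [hc]; field_simp
    calc |(-c)| * ‖(fun i => ((n i : ℝ)))‖ ≤ c * B := this
      _ = ε / 2 := hcB
      _ < ε := by linarith
  have hdot : dotR (fun i => -c * (n i : ℝ)) (fun i => (n i : ℝ)) = -c * Q := by
    rw [dotR, hQ, Finset.mul_sum]
    exact Finset.sum_congr rfl fun i _ => by ring
  have hord_le : (m : ℝ) ≤ -c * Q := by
    rw [← hdot, ← hord]
    exact csInf_le ⟨(m : ℝ), by rintro r ⟨x, hx, rfl⟩; exact hlb x hx⟩ ⟨_, hmem, rfl⟩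
  have hmB : (m : ℝ) * B ≤ -(ε/2) * Q := by
    have h1 : (m : ℝ) * B ≤ (-c * Q) * B := mul_le_mul_of_nonneg_right hord_le hBpos.le
    have h2 : (-c * Q) * B = -(ε/2) * Q := by
      rw [hc]; field_simp
    linarith [h1, h2.le, h2.ge]
  exact ⟨m, hord, hlb, hmB, hBpos, hBQ, hB2⟩

lemma dot_eq_functional {d : ℕ} (f : (Fin d → ℝ) →ₗ[ℝ] ℝ) (y : Fin d → ℝ) :
    f y = dotR (fun i => f (fun j => if i = j then 1 else 0)) y := by
  rw [LinearMap.pi_apply_eq_sum_univ f y, dotR]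
  exact Finset.sum_congr rfl fun i _ => by rw [smul_eq_mul, mul_comm]

lemma separation {d : ℕ} {C : Set (Fin d → ℝ)} (hC : Convex ℝ C)
    (h0 : (0 : Fin d → ℝ) ∈ C) (h0i : (0 : Fin d → ℝ) ∉ interior C) :
    ∃ u : Fin d → ℝ, u ≠ 0 ∧ ∀ y ∈ C, dotR u y ≤ 0 := by
  by_cases hne : (interior C).Nonempty
  · obtain ⟨a, ha⟩ := hne
    obtain ⟨f, hf⟩ := geometric_hahn_banach_open_point hC.interior isOpen_interior h0i
    simp only [map_zero] at hf
    set u : Fin d → ℝ := fun i => f (fun j => if i = j then 1 else 0) with hu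
    have hkey : ∀ y, f y = dotR u y := fun y => dot_eq_functional (f : (Fin d → ℝ) →ₗ[ℝ] ℝ) y
    have hA : f a < 0 := hf a ha
    refine ⟨u, ?_, ?_⟩
    · intro h
      rw [hkey a, h] at hA
      simp [dotR] at hA
    · intro y hy
      rw [← hkey]
      by_contra hpos
      push_neg at hpos
      set t : ℝ := f y / (f y - f a) with ht
      have hden : 0 < f y - f a := by linarith
      have ht0 : 0 < t := div_pos hpos hden
      have ht1 : t < 1 := by rw [ht, div_lt_one hden]; linarith
      have hmem : (1 - t) • y + t • a ∈ interior C :=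
        hC.combo_closure_interior_mem_interior (subset_closure hy) ha (by linarith) ht0 (by ring)
      have hlt := hf _ hmem
      rw [map_add, map_smul, map_smul, smul_eq_mul, smul_eq_mul] at hlt
      have heq : (1 - t) * f y + t * f a = 0 := by
        rw [ht]; field_simp; ring
      linarith
  · -- interior empty
    have hCconv := hC
    have hspan : Submodule.span ℝ C ≠ ⊤ := by
      intro htop
      have haff : affineSpan ℝ C = ⊤ := by
        have h0aff : (0 : Fin d → ℝ) ∈ affineSpan ℝ C := subset_affineSpan ℝ C h0
        have key : ∀ v ∈ Submodule.span ℝ C, v ∈ affineSpan ℝ C := by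
          intro v hv
          induction hv using Submodule.span_induction with
          | mem x hx => exact subset_affineSpan ℝ C hx
          | zero => exact h0aff
          | add x y hx hy ihx ihy =>
            have := AffineSubspace.vadd_mem_of_mem_direction
              (AffineSubspace.vsub_mem_direction ihx h0aff) ihy
            simpa [vsub_eq_sub, vadd_eq_add] using this
          | smul c x hx ih =>
            have := AffineSubspace.smul_vsub_vadd_mem (affineSpan ℝ C) c ih h0aff h0aff
            simpa [vsub_eq_sub, vadd_eq_add] using this
        rw [eq_top_iff]
        intro v _
        exact key v (htop ▸ Submodule.mem_top)
      have := (hC.interior_nonempty_iff_affineSpan_eq_top).2 haff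
      exact hne this
    obtain ⟨f, hf0, hfmap⟩ := Submodule.exists_dual_map_eq_bot_of_lt_top
      (lt_top_iff_ne_top.2 hspan) inferInstance
    set u : Fin d → ℝ := fun i => f (fun j => if i = j then 1 else 0) with hu
    have hkey : ∀ y, f y = dotR u y := fun y => dot_eq_functional f y
    have hzero : ∀ y ∈ C, f y = 0 := by
      intro y hy
      have : f y ∈ Submodule.map f (Submodule.span ℝ C) :=
        Submodule.mem_map_of_mem (Submodule.subset_span hy)
      rw [hfmap] at this
      simpa using this
    refine ⟨u, ?_, fun y hy => by rw [← hkey, hzero y hy]⟩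
    intro h
    apply hf0
    apply LinearMap.ext
    intro y
    rw [show f y = dotR u y from hkey y, h]
    simp [dotR]

lemma m_le_neg_one {m : ℤ} {B Q ε : ℝ} (hmB : (m:ℝ)*B ≤ -(ε/2)*Q) (hB : 0 < B)
    (hBQ : B ≤ Q) (hε : 0 < ε) : (m:ℝ) ≤ -1 := by
  have h1 : (m:ℝ)*B < 0 := by nlinarith
  have h2 : (m:ℝ) < 0 := by nlinarith
  have h3 : m < 0 := by exact_mod_cast h2
  exact_mod_cast (by omega : m ≤ -1)

set_option maxHeartbeats 2000000 in
/-- For a `d`-dimensional canonical Fano polytope `Δ ⊂ ℝ^d` with dual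
`Δ* = {y : ⟨x,y⟩ ≥ −1 ∀ x ∈ Δ}`, the Fine interior `F(Δ)` equals `{0}` if and only if
`[Δ*] = conv(Δ* ∩ ℤ^d)` is also a `d`-dimensional canonical Fano polytope, i.e. the
affine span of `[Δ*]` is `ℝ^d` and `0` is the unique lattice point in its interior. -/
theorem stmt_2 {d : ℕ} (Δ : Set (Fin d → ℝ)) (hΔ : IsCanonicalFano Δ) :
    fineInterior Δ = {0} ↔
      (affineSpan ℝ (convexHull ℝ
          {y : Fin d → ℝ | (∀ x ∈ Δ, -1 ≤ dotR x y) ∧ IsLatticePt y}) = ⊤ ∧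
        (0 : Fin d → ℝ) ∈ interior (convexHull ℝ
          {y : Fin d → ℝ | (∀ x ∈ Δ, -1 ≤ dotR x y) ∧ IsLatticePt y}) ∧
        ∀ x ∈ interior (convexHull ℝ
          {y : Fin d → ℝ | (∀ x ∈ Δ, -1 ≤ dotR x y) ∧ IsLatticePt y}),
          IsLatticePt x → x = 0) := by
  obtain ⟨⟨S, hS⟩, -, h0int, -⟩ := hΔ
  set K : Set (Fin d → ℝ) := {y : Fin d → ℝ | (∀ x ∈ Δ, -1 ≤ dotR x y) ∧ IsLatticePt y}
    with hKdef
  set C : Set (Fin d → ℝ) := convexHull ℝ K with hCdef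
  obtain ⟨ε, hε, hball⟩ := Metric.mem_nhds_iff.1 (mem_interior_iff_mem_nhds.1 h0int)
  have h0Δ : (0 : Fin d → ℝ) ∈ Δ := interior_subset h0int
  have h0K : (0 : Fin d → ℝ) ∈ K := by
    constructor
    · intro x _
      have : dotR x (0 : Fin d → ℝ) = 0 := by simp [dotR]
      linarith
    · intro i; exact ⟨0, by simp⟩
  have h0C : (0 : Fin d → ℝ) ∈ C := subset_convexHull ℝ K h0K
  have hCconv : Convex ℝ C := convex_convexHull ℝ K
  -- 0 is always in the Fine interior
  have zero_mem_fine : (0 : Fin d → ℝ) ∈ fineInterior Δ := by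
    intro n hn
    obtain ⟨m, hord, -, hmB, hBpos, hBQ, -⟩ := ord_master S hS hε hball hn
    have hm1 : (m:ℝ) ≤ -1 := m_le_neg_one hmB hBpos hBQ hε
    have hz : dotR (0 : Fin d → ℝ) (fun i => (n i : ℝ)) = 0 := by simp [dotR]
    rw [hord, hz]; linarith
  -- uniqueness of interior lattice point of C (unconditional)
  have huniq : ∀ x ∈ interior C, IsLatticePt x → x = 0 := by
    intro x hxC hlat
    by_contra hx0
    choose k hk using hlat
    have hxeq : x = fun i => ((k i : ℝ)) := funext hk
    have hk0 : k ≠ 0 := by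
      intro h; apply hx0; rw [hxeq, h]; funext i; simp
    obtain ⟨δ, hδ, hδball⟩ := Metric.mem_nhds_iff.1 (mem_interior_iff_mem_nhds.1 hxC)
    have hxn : 0 < ‖x‖ := norm_pos_iff.2 hx0
    set s : ℝ := δ / (2 * ‖x‖) with hs
    have hspos : 0 < s := by positivity
    have hx'C : x + s • x ∈ C := by
      apply hδball
      rw [Metric.mem_ball, dist_eq_norm, add_sub_cancel_left, norm_smul,
        Real.norm_eq_abs, abs_of_pos hspos]
      have : s * ‖x‖ = δ / 2 := by rw [hs]; field_simp
      rw [this]; linarith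
    have hz' : ∀ z ∈ Δ, -1 ≤ dotR z (x + s • x) :=
      fun z hz => hull_dot_ge' (fun y hy => hy.1 z hz) _ hx'C
    have hpos : ∀ z ∈ S, (0:ℝ) ≤ dotR (fun i => ((z i : ℝ))) x := by
      intro z hz
      have hzΔ : (fun i => ((z i : ℝ))) ∈ Δ := by
        rw [hS]; exact subset_convexHull _ _ ⟨z, hz, rfl⟩
      have h1 := hz' _ hzΔ
      have h2 : dotR (fun i => ((z i : ℝ))) (x + s • x)
          = (1 + s) * dotR (fun i => ((z i : ℝ))) x := by
        rw [(dotRt_linear _).map_add, (dotRt_linear _).map_smul]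
        simp only [smul_eq_mul]; ring
      rw [h2] at h1
      have h3 : dotR (fun i => ((z i : ℝ))) x = ((∑ i, z i * k i : ℤ) : ℝ) := by
        rw [hxeq, dot_cast]
      set Kz : ℤ := ∑ i, z i * k i with hKz
      rw [h3] at h1 ⊢
      by_contra hneg
      push_neg at hneg
      have h4 : (Kz : ℝ) < 0 := hneg
      have h5 : Kz < 0 := by exact_mod_cast h4
      have h6 : (Kz : ℝ) ≤ -1 := by exact_mod_cast (by omega : Kz ≤ -1)
      nlinarith
    have h0le : ∀ w ∈ Δ, (0:ℝ) ≤ dotR w x := by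
      rw [hS]
      apply hull_dot_ge
      rintro _ ⟨z, hz, rfl⟩
      exact hpos z hz
    obtain ⟨m, hord, -, hmB, hBpos, hBQ, -⟩ := ord_master S hS hε hball hk0
    have hm1 : (m:ℝ) ≤ -1 := m_le_neg_one hmB hBpos hBQ hε
    have hge : (0:ℝ) ≤ ordP Δ (fun i => ((k i : ℝ))) := by
      refine le_csInf ⟨_, ⟨0, h0Δ, rfl⟩⟩ ?_
      rintro r ⟨w, hw, rfl⟩
      rw [← hxeq]
      exact h0le w hw
    rw [hord] at hge
    linarith
  -- Fine interior ⊆ {0} given 0 ∈ interior C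
  have hsub : (0 : Fin d → ℝ) ∈ interior C → fineInterior Δ ⊆ {0} := by
    intro h0iC x hx
    rw [Set.mem_singleton_iff]
    by_contra hx0
    obtain ⟨δ, hδ, hδball⟩ := Metric.mem_nhds_iff.1 (mem_interior_iff_mem_nhds.1 h0iC)
    have hK0 : ∀ y ∈ K, 0 ≤ dotR x y := by
      intro y hy
      choose k hk using hy.2
      have hyeq : y = fun i => ((k i : ℝ)) := funext hk
      rcases eq_or_ne k 0 with h | h
      · rw [hyeq, h]
        have : (fun i => (((0 : Fin d → ℤ) i : ℝ))) = (0 : Fin d → ℝ) := by funext i; simp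
        rw [this]
        simp [dotR]
      · have hfin := hx k h
        have hordge : (-1:ℝ) ≤ ordP Δ (fun i => ((k i : ℝ))) := by
          refine le_csInf ⟨_, ⟨0, h0Δ, rfl⟩⟩ ?_
          rintro r ⟨w, hw, rfl⟩
          rw [← hyeq]
          exact hy.1 w hw
        rw [hyeq]
        linarith
    have hC0 : ∀ y ∈ C, 0 ≤ dotR x y := fun y hy => hull_dot_ge' hK0 y hy
    set c : ℝ := δ / (2 * ‖x‖) with hc
    have hxn : 0 < ‖x‖ := norm_pos_iff.2 hx0
    have hcpos : 0 < c := by positivity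
    have hy₀ : (-c) • x ∈ C := by
      apply hδball
      rw [mem_ball_zero_iff, norm_smul, Real.norm_eq_abs, abs_neg, abs_of_pos hcpos]
      have : c * ‖x‖ = δ / 2 := by rw [hc]; field_simp
      rw [this]; linarith
    have h1 := hC0 _ hy₀
    rw [(dotRt_linear x).map_smul] at h1
    simp only [smul_eq_mul] at h1
    obtain ⟨i₀, hi₀⟩ := Function.ne_iff.1 hx0
    have h2 : 0 < dotR x x := by
      apply Finset.sum_pos' (fun i _ => mul_self_nonneg _)
      exact ⟨i₀, Finset.mem_univ _, mul_self_pos.2 (by simpa using hi₀)⟩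
    nlinarith
  -- main: fineInterior = {0} → 0 ∈ interior C
  have hmain : fineInterior Δ = {0} → (0 : Fin d → ℝ) ∈ interior C := by
    intro hfine
    by_contra h0iC
    obtain ⟨u, hu0, huC⟩ := separation hCconv h0C h0iC
    obtain ⟨i₀, hi₀⟩ := Function.ne_iff.1 hu0
    set U : ℝ := ∑ i, |u i| with hU
    have hUpos : 0 < U := by
      apply Finset.sum_pos' (fun i _ => abs_nonneg _)
      exact ⟨i₀, Finset.mem_univ _, by simpa using hi₀⟩
    have hd : (0:ℝ) < d := by exact_mod_cast i₀.pos
    set t : ℝ := ε / (4 * d * U) with ht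
    have htpos : 0 < t := by positivity
    set x : Fin d → ℝ := (-t) • u with hx
    have hxfine : x ∈ fineInterior Δ := by
      intro n hn
      obtain ⟨m, hord, hlb, hmB, hBpos, hBQ, hB2⟩ := ord_master S hS hε hball hn
      set B : ℝ := ∑ i, |(n i : ℝ)| with hB
      set Q : ℝ := ∑ i, ((n i : ℝ))^2 with hQ
      have hdotx : dotR x (fun i => (n i : ℝ)) = -t * dotR u (fun i => (n i : ℝ)) := by
        rw [hx, (dotL_linear _).map_smul]
        simp [smul_eq_mul]
      by_cases hcase : ∀ z ∈ Δ, -1 ≤ dotR z (fun i => (n i : ℝ))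
      · have hnK : (fun i => ((n i : ℝ))) ∈ K := ⟨hcase, fun i => ⟨n i, rfl⟩⟩
        have h1 : dotR u (fun i => (n i : ℝ)) ≤ 0 := huC _ (subset_convexHull ℝ K hnK)
        have hm1 : (m:ℝ) ≤ -1 := m_le_neg_one hmB hBpos hBQ hε
        rw [hord, hdotx]
        nlinarith [mul_nonneg htpos.le (neg_nonneg.2 h1)]
      · push_neg at hcase
        obtain ⟨z, hz, hzlt⟩ := hcase
        have hordle : (m:ℝ) ≤ dotR z (fun i => (n i : ℝ)) := by
          rw [← hord]
          exact csInf_le ⟨(m:ℝ), by rintro r ⟨w, hw, rfl⟩; exact hlb w hw⟩ ⟨z, hz, rfl⟩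
        have hm2 : (m:ℝ) ≤ -2 := by
          have : (m:ℝ) < -1 := lt_of_le_of_lt hordle hzlt
          have h5 : m < -1 := by exact_mod_cast this
          exact_mod_cast (by omega : m ≤ -2)
        have habs : |dotR u (fun i => (n i : ℝ))| ≤ U * B := by
          calc |dotR u (fun i => (n i : ℝ))| ≤ ∑ i, |u i * (n i : ℝ)| :=
                Finset.abs_sum_le_sum_abs _ _
            _ = ∑ i, |u i| * |(n i : ℝ)| := by simp [abs_mul]
            _ ≤ ∑ i, |u i| * B := by
                apply Finset.sum_le_sum
                intro i _
                exact mul_le_mul_of_nonneg_left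
                  (Finset.single_le_sum (fun j _ => abs_nonneg ((n j : ℝ)))
                    (Finset.mem_univ i)) (abs_nonneg _)
            _ = U * B := by rw [hU, Finset.sum_mul]
        have h2 : (d:ℝ) * ((m:ℝ)*B) ≤ -(ε/2)*B^2 := by
          have e1 : (d:ℝ) * ((m:ℝ)*B) ≤ (d:ℝ) * (-(ε/2)*Q) :=
            mul_le_mul_of_nonneg_left hmB hd.le
          have e2 : (ε/2) * B^2 ≤ (ε/2) * ((d:ℝ)*Q) :=
            mul_le_mul_of_nonneg_left hB2 (by positivity)
          nlinarith
        have h3 : (d:ℝ) * (m:ℝ) ≤ -(ε/2)*B := by nlinarith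
        have h4 : ((m:ℝ)+1) * (4*d) ≤ -(ε*B) := by
          nlinarith [mul_le_mul_of_nonneg_left hm2 hd.le]
        have h5 : -t * dotR u (fun i => (n i : ℝ)) ≥ -(t * (U*B)) := by
          nlinarith [mul_le_mul_of_nonneg_left
            (le_trans (le_abs_self _) habs) htpos.le]
        have h6 : t * (U*B) = ε*B/(4*d) := by
          rw [ht]; field_simp
        have h7 : ((m:ℝ)+1) ≤ -(ε*B/(4*d)) := by
          rw [← neg_div]
          rw [le_div_iff₀ (by positivity : (0:ℝ) < 4*d)]
          exact h4
        rw [hord, hdotx]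
        linarith
    have hxne : x ≠ 0 := by
      intro h
      apply hi₀
      have h2 : -t * u i₀ = 0 := congrFun h i₀
      rcases mul_eq_zero.1 h2 with h3 | h3
      · exact absurd h3 (neg_ne_zero.2 htpos.ne')
      · exact h3
    rw [hfine] at hxfine
    exact hxne hxfine
  constructor
  · intro hfine
    have h0iC := hmain hfine
    exact ⟨(hCconv.interior_nonempty_iff_affineSpan_eq_top).1 ⟨0, h0iC⟩, h0iC, huniq⟩
  · rintro ⟨-, h0iC, -⟩
    exact Set.eq_of_subset_of_subset (hsub h0iC)
      (Set.singleton_subset_iff.2 zero_mem_fine)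
end

section
/- Let w̄ = (w_0,…,w_d) be a weight vector and let v_0,…,v_d ∈ ℤ^d generate ℤ^d as an abelian group and satisfy Σ_{i=0}^d w_i v_i = 0; set Δ*_{w̄} := conv(v_0,…,v_d) ⊂ ℝ^d. Then the Fine interior F(Δ*_{w̄}) equals {0} if and only if the weight vector w̄ has the IP-property. (Corollary 4.8.) -/
lemma dotR_zero_left {d : ℕ} (y : Fin d → ℝ) : dotR 0 y = 0 := by
  simp [dotR]

lemma dotR_smul {d : ℕ} (c : ℝ) (x y : Fin d → ℝ) : dotR (c • x) y = c * dotR x y := by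
  simp [dotR, Finset.mul_sum, mul_assoc]

lemma eq_zero_of_dotR_self {d : ℕ} {x : Fin d → ℝ} (h : dotR x x ≤ 0) : x = 0 := by
  have h2 : ∑ i, x i * x i = 0 := le_antisymm h (Finset.sum_nonneg fun i _ => mul_self_nonneg _)
  funext j
  have := (Finset.sum_eq_zero_iff_of_nonneg (fun i _ => mul_self_nonneg (x i))).1 h2 j (Finset.mem_univ j)
  exact mul_self_eq_zero.1 this

lemma dot_hull_ge {d : ℕ} {s : Set (Fin d → ℝ)} {n : Fin d → ℝ} {c : ℝ}
    (h : ∀ x ∈ s, c ≤ dotR x n) : ∀ x ∈ convexHull ℝ s, c ≤ dotR x n := by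
  have hconv : Convex ℝ {x : Fin d → ℝ | c ≤ dotR x n} := by
    refine convex_halfSpace_ge ?_ c
    exact ⟨fun a b => by simp [dotR, add_mul, Finset.sum_add_distrib],
           fun r a => by simp [dotR, Finset.mul_sum, mul_assoc]⟩
  exact fun x hx => convexHull_min h hconv hx

lemma eps_le {A B : ℝ} (hB : B < 0) (h : ∀ t : ℝ, 0 < t → t < 1 → (1 - t) * A + t * B < 0) :
    A ≤ 0 := by
  by_contra hA
  push_neg at hA
  have hAB : 0 < A - B := by linarith
  set t := A / (2 * (A - B)) with ht
  have ht0 : 0 < t := div_pos hA (by linarith)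
  have ht1 : t < 1 := by
    rw [div_lt_one (by linarith)]; linarith
  have := h t ht0 ht1
  have htv : t * (A - B) = A / 2 := by
    rw [ht, div_mul_eq_mul_div, div_eq_div_iff (ne_of_gt (by linarith)) (by norm_num)]; ring
  nlinarith [htv]

lemma linfun_rep {d : ℕ} (f : (Fin d → ℝ) →L[ℝ] ℝ) :
    ∃ x : Fin d → ℝ, ∀ y, dotR x y = -(f y) := by
  refine ⟨fun j => -(f fun k => if j = k then 1 else 0), fun y => ?_⟩
  have hy : f y = ∑ j, y j * f (fun k => if j = k then (1:ℝ) else 0) := by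
    conv_lhs => rw [pi_eq_sum_univ y]
    rw [map_sum]
    simp [smul_eq_mul]
  rw [hy, dotR, ← Finset.sum_neg_distrib]
  exact Finset.sum_congr rfl fun j _ => by ring


def Vr {d : ℕ} (v : Fin (d+1) → Fin d → ℤ) : Fin (d+1) → Fin d → ℝ := fun i j => (v i j : ℝ)

def Pset {d : ℕ} (v : Fin (d+1) → Fin d → ℤ) : Set (Fin d → ℝ) :=
  {y | ∃ n : Fin d → ℤ, (∀ j, y j = (n j : ℝ)) ∧ ∀ i, -1 ≤ ∑ j, v i j * n j}

noncomputable def mZ {d : ℕ} (v : Fin (d+1) → Fin d → ℤ) (n : Fin d → ℤ) : ℤ :=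
  Finset.univ.inf' Finset.univ_nonempty (fun i => ∑ j, v i j * n j)

lemma cast_dot {d : ℕ} (v : Fin (d+1) → Fin d → ℤ) (i : Fin (d+1)) (n : Fin d → ℤ) :
    dotR (Vr v i) (fun j => (n j : ℝ)) = ((∑ j, v i j * n j : ℤ) : ℝ) := by
  simp [dotR, Vr]

lemma ord_star {d : ℕ} (v : Fin (d+1) → Fin d → ℤ) (n : Fin d → ℤ) :
    ordP (convexHull ℝ (Set.range (Vr v))) (fun j => (n j : ℝ)) = (mZ v n : ℝ) := by
  set nc : Fin d → ℝ := fun j => (n j : ℝ)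
  have hlb : ∀ x ∈ Set.range (Vr v), (mZ v n : ℝ) ≤ dotR x nc := by
    rintro x ⟨i, rfl⟩
    rw [cast_dot]
    exact_mod_cast Finset.inf'_le _ (Finset.mem_univ i)
  have hlb' := dot_hull_ge hlb
  have hne : ((fun x => dotR x nc) '' (convexHull ℝ (Set.range (Vr v)))).Nonempty :=
    ⟨dotR (Vr v 0) nc, ⟨Vr v 0, subset_convexHull ℝ _ ⟨0, rfl⟩, rfl⟩⟩
  refine le_antisymm ?_ ?_
  · obtain ⟨i, -, hi⟩ := Finset.exists_mem_eq_inf' (Finset.univ_nonempty)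
      (fun i => ∑ j, v i j * n j)
    have : dotR (Vr v i) nc = (mZ v n : ℝ) := by rw [cast_dot, mZ, ← hi]
    refine csInf_le ⟨(mZ v n : ℝ), ?_⟩ ⟨Vr v i, subset_convexHull ℝ _ ⟨i, rfl⟩, this⟩
    rintro b ⟨x, hx, rfl⟩
    exact hlb' x hx
  · exact le_csInf hne (by rintro b ⟨x, hx, rfl⟩; exact hlb' x hx)

lemma hz_real {d : ℕ} {v : Fin (d+1) → Fin d → ℤ} {z : Fin d → Fin (d+1) → ℤ}
    (hz : ∀ j, ∑ i, z j i • v i = Pi.single j (1:ℤ)) (j k : Fin d) :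
    ∑ i, (z j i : ℝ) * (v i k : ℝ) = if j = k then 1 else 0 := by
  have := congrFun (hz j) k
  have h2 : (∑ i, z j i * v i k : ℤ) = (Pi.single j 1 : Fin d → ℤ) k := by
    simpa using this
  have h3 : ((∑ i, z j i * v i k : ℤ) : ℝ) = (((Pi.single j 1 : Fin d → ℤ) k : ℤ) : ℝ) := by rw [h2]
  push_cast at h3
  rw [h3, Pi.single_apply]
  by_cases h : j = k
  · simp [h]
  · simp [h, Ne.symm h]

lemma nj_eq {d : ℕ} {v : Fin (d+1) → Fin d → ℤ} {z : Fin d → Fin (d+1) → ℤ}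
    (hz : ∀ j, ∑ i, z j i • v i = Pi.single j (1:ℤ)) (n : Fin d → ℤ) (j : Fin d) :
    n j = ∑ i, z j i * (∑ k, v i k * n k) := by
  have heq : ∑ i, z j i * (∑ k, v i k * n k) = ∑ k, (∑ i, z j i * v i k) * n k := by
    simp only [Finset.mul_sum, Finset.sum_mul]
    rw [Finset.sum_comm]
    exact Finset.sum_congr rfl fun k _ => Finset.sum_congr rfl fun i _ => by ring
  rw [heq]
  have hcoef : ∀ k, (∑ i, z j i * v i k) = if j = k then 1 else 0 := by
    intro k
    have h := congrFun (hz j) k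
    have h2 : (∑ i, z j i * v i k : ℤ) = (Pi.single j 1 : Fin d → ℤ) k := by simpa using h
    rw [h2, Pi.single_apply]
    by_cases hh : j = k
    · simp [hh]
    · simp [hh, Ne.symm hh]
  simp [hcoef]

section Main
variable {d : ℕ} {w : Fin (d+1) → ℕ} {v : Fin (d+1) → Fin d → ℤ} {z : Fin d → Fin (d+1) → ℤ}

lemma wdot_sum (hrel : ∑ i, (w i : ℤ) • v i = 0) (n : Fin d → ℤ) :
    ∑ i, (w i : ℤ) * (∑ j, v i j * n j) = 0 := by
  have hcoord : ∀ j, ∑ i, (w i : ℤ) * v i j = 0 := by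
    intro j
    have := congrFun hrel j
    simpa using this
  have : ∑ i, (w i : ℤ) * (∑ j, v i j * n j) = ∑ j, (∑ i, (w i : ℤ) * v i j) * n j := by
    simp only [Finset.mul_sum, Finset.sum_mul]
    rw [Finset.sum_comm]
    exact Finset.sum_congr rfl fun j _ => Finset.sum_congr rfl fun i _ => by ring
  rw [this]
  simp [hcoord]

lemma mZ_nonpos (hw : ∀ i, 0 < w i) (hrel : ∑ i, (w i : ℤ) • v i = 0) (n : Fin d → ℤ) :
    mZ v n ≤ 0 := by
  by_contra h
  push_neg at h
  have hall : ∀ i, 0 < ∑ j, v i j * n j := fun i =>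
    lt_of_lt_of_le h (Finset.inf'_le _ (Finset.mem_univ i))
  have hpos : 0 < ∑ i, (w i : ℤ) * (∑ j, v i j * n j) :=
    Finset.sum_pos (fun i _ => mul_pos (by exact_mod_cast hw i) (hall i)) ⟨0, Finset.mem_univ 0⟩
  rw [wdot_sum hrel n] at hpos
  exact lt_irrefl 0 hpos

lemma mZ_neg (hw : ∀ i, 0 < w i) (hrel : ∑ i, (w i : ℤ) • v i = 0)
    (hz : ∀ j, ∑ i, z j i • v i = Pi.single j (1:ℤ)) {n : Fin d → ℤ} (hn : n ≠ 0) :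
    mZ v n ≤ -1 := by
  by_contra h
  push_neg at h
  have h0 : 0 ≤ mZ v n := by omega
  have hall : ∀ i, 0 ≤ ∑ j, v i j * n j := fun i =>
    le_trans h0 (Finset.inf'_le _ (Finset.mem_univ i))
  have hzero : ∀ i, (w i : ℤ) * (∑ j, v i j * n j) = 0 := by
    intro i
    refine (Finset.sum_eq_zero_iff_of_nonneg
      (fun i _ => mul_nonneg (by positivity) (hall i))).1 (wdot_sum hrel n) i (Finset.mem_univ i)
  have hdz : ∀ i, (∑ j, v i j * n j) = 0 := by
    intro i
    have hwi : (w i : ℤ) ≠ 0 := by exact_mod_cast (hw i).ne'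
    exact (mul_eq_zero.1 (hzero i)).resolve_left hwi
  apply hn
  funext j
  rw [nj_eq hz n j]
  simp [hdz]

lemma abs_dot_le (hw : ∀ i, 0 < w i) (hrel : ∑ i, (w i : ℤ) • v i = 0)
    (n : Fin d → ℤ) (i : Fin (d+1)) :
    |∑ j, v i j * n j| ≤ (∑ k, (w k : ℤ)) * (-(mZ v n)) := by
  set m : ℤ := -(mZ v n) with hmdef
  have hm0 : 0 ≤ m := by
    have := mZ_nonpos hw hrel n; omega
  have hlow : ∀ k, -(∑ j, v k j * n j) ≤ m := fun k => by
    have h1 : mZ v n ≤ ∑ j, v k j * n j :=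
      Finset.inf'_le (fun i => ∑ j, v i j * n j) (Finset.mem_univ k)
    omega
  have hW1 : 1 ≤ ∑ k, (w k : ℤ) := by
    calc (1:ℤ) ≤ (w 0 : ℤ) := by exact_mod_cast hw 0
    _ ≤ ∑ k, (w k : ℤ) := Finset.single_le_sum (f := fun k => (w k : ℤ))
        (fun k _ => by positivity) (Finset.mem_univ 0)
  rw [abs_le]
  constructor
  · have h1 : -(∑ j, v i j * n j) ≤ m := hlow i
    nlinarith
  · rcases le_or_gt (∑ j, v i j * n j) 0 with hle | hgt
    · nlinarith
    · have hsplit : (w i : ℤ) * (∑ j, v i j * n j)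
          = -∑ k ∈ Finset.univ.erase i, (w k : ℤ) * (∑ j, v k j * n j) := by
        have := wdot_sum hrel n
        rw [← Finset.sum_erase_add _ _ (Finset.mem_univ i)] at this
        linarith
      have hbound : -∑ k ∈ Finset.univ.erase i, (w k : ℤ) * (∑ j, v k j * n j)
          ≤ ∑ k ∈ Finset.univ.erase i, (w k : ℤ) * m := by
        rw [← Finset.sum_neg_distrib]
        refine Finset.sum_le_sum fun k _ => ?_
        have := hlow k
        nlinarith [Int.ofNat_nonneg (w k)]
      have hWsum : ∑ k ∈ Finset.univ.erase i, (w k : ℤ) * m ≤ (∑ k, (w k : ℤ)) * m := by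
        rw [Finset.sum_mul]
        refine Finset.sum_le_sum_of_subset_of_nonneg (Finset.erase_subset _ _) ?_
        intro k _ _
        positivity
      have hwd : (∑ j, v i j * n j) ≤ (w i : ℤ) * (∑ j, v i j * n j) := by
        have : (1:ℤ) ≤ (w i : ℤ) := by exact_mod_cast hw i
        nlinarith
      linarith

lemma abs_nj_le (hw : ∀ i, 0 < w i) (hrel : ∑ i, (w i : ℤ) • v i = 0)
    (hz : ∀ j, ∑ i, z j i • v i = Pi.single j (1:ℤ)) (n : Fin d → ℤ) (j : Fin d) :
    |n j| ≤ (∑ i, |z j i|) * ((∑ k, (w k : ℤ)) * (-(mZ v n))) := by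
  rw [nj_eq hz n j]
  calc |∑ i, z j i * (∑ k, v i k * n k)| ≤ ∑ i, |z j i * (∑ k, v i k * n k)| :=
        Finset.abs_sum_le_sum_abs _ _
    _ ≤ ∑ i, |z j i| * ((∑ k, (w k : ℤ)) * (-(mZ v n))) := by
        refine Finset.sum_le_sum fun i _ => ?_
        rw [abs_mul]
        exact mul_le_mul_of_nonneg_left (abs_dot_le hw hrel n i) (abs_nonneg _)
    _ = (∑ i, |z j i|) * ((∑ k, (w k : ℤ)) * (-(mZ v n))) := (Finset.sum_mul _ _ _).symm

end Main

section L1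
variable {d : ℕ} {w : Fin (d+1) → ℕ} {v : Fin (d+1) → Fin d → ℤ} {z : Fin d → Fin (d+1) → ℤ}

lemma L1 (hw : ∀ i, 0 < w i) (hrel : ∑ i, (w i : ℤ) • v i = 0)
    (hz : ∀ j, ∑ i, z j i • v i = Pi.single j (1:ℤ)) :
    fineInterior (convexHull ℝ (Set.range (Vr v))) = {0} ↔
      {x : Fin d → ℝ | ∀ y ∈ Pset v, 0 ≤ dotR x y} = {0} := by
  have hmem0 : (0 : Fin d → ℝ) ∈ {x : Fin d → ℝ | ∀ y ∈ Pset v, 0 ≤ dotR x y} := by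
    intro y _; rw [dotR_zero_left]
  constructor
  · intro hF
    refine Set.eq_singleton_iff_unique_mem.2 ⟨hmem0, ?_⟩
    intro x hx
    set D : ℝ := ∑ j, |x j| * (((∑ i, |z j i|) * (∑ k, (w k : ℤ)) : ℤ) : ℝ) with hDdef
    have hD0 : 0 ≤ D := by
      refine Finset.sum_nonneg fun j _ => mul_nonneg (abs_nonneg _) ?_
      have h1 : (0:ℤ) ≤ (∑ i, |z j i|) * (∑ k, (w k : ℤ)) := by positivity
      exact_mod_cast h1
    set ε : ℝ := 1/(2*D+2) with hεdef
    have hε : 0 < ε := by positivity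
    have hεD : ε * D ≤ 1/2 := by
      rw [hεdef, one_div, inv_mul_le_iff₀ (by positivity)]
      linarith
    have hmem : ε • x ∈ fineInterior (convexHull ℝ (Set.range (Vr v))) := by
      intro n hn
      rw [ord_star v n, dotR_smul]
      by_cases hc : ∀ i, -1 ≤ ∑ j, v i j * n j
      · have hm1 : mZ v n = -1 := le_antisymm (mZ_neg hw hrel hz hn)
          (Finset.le_inf' _ _ fun i _ => hc i)
        rw [hm1]
        have h0 : 0 ≤ dotR x (fun j => (n j : ℝ)) := hx _ ⟨n, fun j => rfl, hc⟩
        have := mul_nonneg hε.le h0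
        push_cast
        linarith
      · push_neg at hc
        obtain ⟨i0, hi0⟩ := hc
        have hm2 : mZ v n ≤ -2 :=
          le_trans (Finset.inf'_le (fun i => ∑ j, v i j * n j) (Finset.mem_univ i0)) (by omega)
        set m : ℤ := -(mZ v n) with hmdef
        have hm2' : (2:ℝ) ≤ (m:ℝ) := by exact_mod_cast (by omega : (2:ℤ) ≤ m)
        have hb : |dotR x (fun j => (n j : ℝ))| ≤ D * (m:ℝ) := by
          rw [dotR]
          calc |∑ j, x j * (n j : ℝ)| ≤ ∑ j, |x j * (n j : ℝ)| := Finset.abs_sum_le_sum_abs _ _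
            _ ≤ ∑ j, |x j| * ((((∑ i, |z j i|) * (∑ k, (w k : ℤ)) : ℤ) : ℝ) * (m:ℝ)) := by
                refine Finset.sum_le_sum fun j _ => ?_
                rw [abs_mul]
                refine mul_le_mul_of_nonneg_left ?_ (abs_nonneg _)
                have h1 : |n j| ≤ ((∑ i, |z j i|) * (∑ k, (w k : ℤ))) * m := by
                  have := abs_nj_le hw hrel hz n j
                  rw [hmdef]
                  linarith [this, mul_assoc (∑ i, |z j i|) (∑ k, (w k : ℤ)) (-(mZ v n))]
                calc |(n j : ℝ)| = ((|n j| : ℤ) : ℝ) := by push_cast; rfl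
                  _ ≤ ((((∑ i, |z j i|) * (∑ k, (w k : ℤ))) * m : ℤ) : ℝ) := by exact_mod_cast h1
                  _ = (((∑ i, |z j i|) * (∑ k, (w k : ℤ)) : ℤ) : ℝ) * (m:ℝ) := by push_cast; ring
            _ = D * (m:ℝ) := by rw [hDdef, Finset.sum_mul]; exact Finset.sum_congr rfl fun j _ => by ring
        have hcast : (mZ v n : ℝ) = -(m:ℝ) := by rw [hmdef]; push_cast; ring
        rw [hcast]
        have hdot_ge : -(D * (m:ℝ)) ≤ dotR x (fun j => (n j : ℝ)) := neg_abs_le _ |>.trans' (by linarith [hb])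
        have t1 : 0 ≤ ε * (dotR x (fun j => (n j : ℝ)) + D * (m:ℝ)) :=
          mul_nonneg hε.le (by linarith)
        have t2 : ε * D * (m:ℝ) ≤ (1/2) * (m:ℝ) :=
          mul_le_mul_of_nonneg_right hεD (by linarith)
        nlinarith [t1, t2, hm2']
    rw [hF] at hmem
    have := Set.mem_singleton_iff.1 hmem
    rcases smul_eq_zero.1 this with h | h
    · exact absurd h hε.ne'
    · exact h
  · intro hC
    refine Set.eq_singleton_iff_unique_mem.2 ⟨?_, ?_⟩
    · intro n hn
      rw [ord_star v n, dotR_zero_left]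
      have := mZ_neg hw hrel hz hn
      have : (mZ v n : ℝ) ≤ -1 := by exact_mod_cast this
      linarith
    · intro x hxF
      have hxC : x ∈ {x : Fin d → ℝ | ∀ y ∈ Pset v, 0 ≤ dotR x y} := by
        rintro y ⟨n, hyn, hni⟩
        have hyeq : y = fun j => (n j : ℝ) := funext hyn
        subst hyeq
        by_cases hn : n = 0
        · subst hn; simp [dotR]
        · have h1 := hxF n hn
          rw [ord_star v n] at h1
          have hm1 : mZ v n = -1 := le_antisymm (mZ_neg hw hrel hz hn)
            (Finset.le_inf' _ _ fun i _ => hni i)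
          rw [hm1] at h1
          push_cast at h1
          linarith
      rw [hC] at hxC
      exact hxC

end L1

section L2
variable {d : ℕ}

lemma dotR_comm (x y : Fin d → ℝ) : dotR x y = dotR y x := by
  simp [dotR, mul_comm]

lemma affineSpan_eq_top_of_direction {E : Type*} [NormedAddCommGroup E] [NormedSpace ℝ E]
    {s : Set E} (hne : s.Nonempty) (hdir : (affineSpan ℝ s).direction = ⊤) :
    affineSpan ℝ s = ⊤ := by
  obtain ⟨p, hp⟩ := hne
  rw [eq_top_iff]
  intro q _
  have hq : q -ᵥ p ∈ (affineSpan ℝ s).direction := by rw [hdir]; trivial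
  have := AffineSubspace.vadd_mem_of_mem_direction hq (subset_affineSpan ℝ s hp)
  simpa using this

lemma L2 (s : Set (Fin d → ℝ)) (h0 : (0 : Fin d → ℝ) ∈ s) :
    {x : Fin d → ℝ | ∀ y ∈ s, 0 ≤ dotR x y} = {0} ↔
      (0 : Fin d → ℝ) ∈ interior (convexHull ℝ s) := by
  have hmem0 : (0 : Fin d → ℝ) ∈ {x : Fin d → ℝ | ∀ y ∈ s, 0 ≤ dotR x y} := by
    intro y _; rw [dotR_zero_left]
  constructor
  · intro hC
    by_contra h0int
    have hexists : ∃ x : Fin d → ℝ, x ≠ 0 ∧ ∀ y ∈ s, 0 ≤ dotR x y := by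
      by_cases hsp : Submodule.span ℝ s = ⊤
      · have hdir : (affineSpan ℝ s).direction = ⊤ := by
          rw [eq_top_iff, ← hsp, Submodule.span_le]
          intro y hy
          have := AffineSubspace.vsub_mem_direction (subset_affineSpan ℝ s hy)
            (subset_affineSpan ℝ s h0)
          simpa using this
        have haff : affineSpan ℝ s = ⊤ := affineSpan_eq_top_of_direction ⟨0, h0⟩ hdir
        have hint : (interior (convexHull ℝ s)).Nonempty :=
          (convex_convexHull ℝ s).interior_nonempty_iff_affineSpan_eq_top.2
            (by rw [affineSpan_convexHull]; exact haff)
        obtain ⟨y0, hy0⟩ := hint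
        obtain ⟨f, hf⟩ := geometric_hahn_banach_open_point
          ((convex_convexHull ℝ s).interior) isOpen_interior h0int
        have hf0 : f (0 : Fin d → ℝ) = 0 := map_zero f
        have hfy0 : f y0 < 0 := by have := hf y0 hy0; rwa [hf0] at this
        have hfle : ∀ p ∈ convexHull ℝ s, f p ≤ 0 := by
          intro p hp
          refine eps_le hfy0 fun t ht0 ht1 => ?_
          have hco : (1 - t) • p + t • y0 ∈ interior (convexHull ℝ s) :=
            (convex_convexHull ℝ s).combo_closure_interior_mem_interior
              (subset_closure hp) hy0 (by linarith) ht0 (by ring)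
          have := hf _ hco
          rw [map_add, map_smul, map_smul, hf0] at this
          simpa [smul_eq_mul] using this
        obtain ⟨x, hxrep⟩ := linfun_rep f
        refine ⟨x, ?_, ?_⟩
        · intro hx0
          have : f y0 = 0 := by
            have h1 := hxrep y0
            rw [hx0, dotR_zero_left] at h1
            linarith
          linarith
        · intro y hy
          rw [hxrep y]
          have := hfle y (subset_convexHull ℝ s hy)
          linarith
      · have hexp : ∃ p, p ∉ Submodule.span ℝ s := by
          by_contra hall
          push_neg at hall
          exact hsp (Submodule.eq_top_iff'.2 hall)
        obtain ⟨p, hp⟩ := hexp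
        obtain ⟨f, u, hfu, hup⟩ := geometric_hahn_banach_closed_point
          (Submodule.span ℝ s).convex (Submodule.closed_of_finiteDimensional _) hp
        have hu0 : 0 < u := by
          have := hfu 0 (Submodule.zero_mem _)
          rwa [map_zero] at this
        have hker : ∀ y ∈ Submodule.span ℝ s, f y = 0 := by
          intro y hy
          by_contra hfy
          have hmem : ((|u| + 1) / f y) • y ∈ Submodule.span ℝ s :=
            Submodule.smul_mem _ _ hy
          have := hfu _ hmem
          rw [map_smul, smul_eq_mul, div_mul_cancel₀ _ hfy] at this
          have habs : u ≤ |u| := le_abs_self u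
          linarith
        obtain ⟨x, hxrep⟩ := linfun_rep f
        refine ⟨x, ?_, ?_⟩
        · intro hx0
          have h1 := hxrep p
          rw [hx0, dotR_zero_left] at h1
          have : f p = 0 := by linarith
          linarith
        · intro y hy
          rw [hxrep y, hker y (Submodule.subset_span hy)]
          linarith
    obtain ⟨x, hx0, hxs⟩ := hexists
    have : x ∈ {x : Fin d → ℝ | ∀ y ∈ s, 0 ≤ dotR x y} := hxs
    rw [hC] at this
    exact hx0 this
  · intro hint
    refine Set.eq_singleton_iff_unique_mem.2 ⟨hmem0, ?_⟩
    intro x hx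
    have hhull : ∀ p ∈ convexHull ℝ s, 0 ≤ dotR p x := by
      refine dot_hull_ge fun y hy => ?_
      rw [dotR_comm]; exact hx y hy
    obtain ⟨ε, hε, hball⟩ := Metric.mem_nhds_iff.1 (mem_interior_iff_mem_nhds.1 hint)
    set δ : ℝ := ε / (2 * (‖x‖ + 1)) with hδdef
    have hδ : 0 < δ := by positivity
    have hmemball : (-δ) • x ∈ Metric.ball (0 : Fin d → ℝ) ε := by
      rw [Metric.mem_ball, dist_zero_right, norm_smul, Real.norm_eq_abs,
        abs_neg, abs_of_pos hδ]
      rw [hδdef, div_mul_eq_mul_div, div_lt_iff₀ (by positivity)]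
      nlinarith [norm_nonneg x, hε]
    have h2 := hhull _ (hball hmemball)
    rw [dotR_smul] at h2
    have h3 : dotR x x ≤ 0 := by nlinarith [hδ]
    exact eq_zero_of_dotR_self h3

section Intrinsic

lemma intrinsic_image {E F : Type*} [NormedAddCommGroup E] [NormedSpace ℝ E]
    [FiniteDimensional ℝ E] [NormedAddCommGroup F] [NormedSpace ℝ F] [FiniteDimensional ℝ F]
    (A : E →ᵃ[ℝ] F) (B : F →ᵃ[ℝ] E) (hBA : ∀ x, B (A x) = x) (T : Set E)
    (hT : affineSpan ℝ T = ⊤) :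
    intrinsicInterior ℝ (⇑A '' T) = ⇑A '' interior T := by
  have hspan : affineSpan ℝ (⇑A '' T) = (⊤ : AffineSubspace ℝ E).map A := by
    rw [← hT, AffineSubspace.map_span]
  have hmemspan : ∀ u : F, u ∈ affineSpan ℝ (⇑A '' T) ↔ ∃ y : E, A y = u := by
    intro u
    rw [hspan]
    simp [AffineSubspace.mem_map]
  let h : E ≃ₜ (affineSpan ℝ (⇑A '' T)) :=
    { toFun := fun y => ⟨A y, (hmemspan (A y)).2 ⟨y, rfl⟩⟩
      invFun := fun p => B p
      left_inv := hBA
      right_inv := fun p => by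
        obtain ⟨y, hy⟩ := (hmemspan p.1).1 p.2
        exact Subtype.ext (by simp only [← hy, hBA])
      continuous_toFun := (A.continuous_of_finiteDimensional).subtype_mk _
      continuous_invFun := B.continuous_of_finiteDimensional.comp continuous_subtype_val }
  have hpre : (Subtype.val ⁻¹' (⇑A '' T) : Set (affineSpan ℝ (⇑A '' T))) = ⇑h '' T := by
    ext p
    simp only [Set.mem_preimage, Set.mem_image]
    constructor
    · rintro ⟨t, ht, hAt⟩
      exact ⟨t, ht, Subtype.ext hAt⟩
    · rintro ⟨t, ht, rfl⟩
      exact ⟨t, ht, rfl⟩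
  show Subtype.val '' interior (Subtype.val ⁻¹' (⇑A '' T) : Set (affineSpan ℝ (⇑A '' T)))
      = ⇑A '' interior T
  rw [hpre, ← Homeomorph.image_interior, ← Set.image_comp]
  rfl

end Intrinsic

section L3
variable {d : ℕ}

noncomputable def Mlin (v : Fin (d+1) → Fin d → ℤ) : (Fin d → ℝ) →ₗ[ℝ] (Fin (d+1) → ℝ) where
  toFun y := fun i => ∑ j, (v i j : ℝ) * y j
  map_add' a b := by funext i; simp [mul_add, Finset.sum_add_distrib]
  map_smul' c a := by
    funext i
    simp only [Pi.smul_apply, smul_eq_mul, RingHom.id_apply, Finset.mul_sum]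
    exact Finset.sum_congr rfl fun j _ => by ring

noncomputable def Blin (z : Fin d → Fin (d+1) → ℤ) : (Fin (d+1) → ℝ) →ₗ[ℝ] (Fin d → ℝ) where
  toFun u := fun j => ∑ i, u i * (z j i : ℝ)
  map_add' a b := by funext j; simp [add_mul, Finset.sum_add_distrib]
  map_smul' c a := by
    funext j
    simp only [Pi.smul_apply, smul_eq_mul, RingHom.id_apply, Finset.mul_sum]
    exact Finset.sum_congr rfl fun i _ => by ring

noncomputable def Aff (v : Fin (d+1) → Fin d → ℤ) : (Fin d → ℝ) →ᵃ[ℝ] (Fin (d+1) → ℝ) where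
  toFun y := Mlin v y + fun _ => 1
  linear := Mlin v
  map_vadd' p u := by
    show Mlin v (u + p) + _ = Mlin v u + (Mlin v p + _)
    rw [map_add]
    abel

noncomputable def Baff (z : Fin d → Fin (d+1) → ℤ) : (Fin (d+1) → ℝ) →ᵃ[ℝ] (Fin d → ℝ) where
  toFun u := Blin z (u - fun _ => 1)
  linear := Blin z
  map_vadd' p u := by
    show Blin z ((u + p) - _) = Blin z u + Blin z (p - _)
    rw [← map_add]
    congr 1
    abel

variable {w : Fin (d+1) → ℕ} {v : Fin (d+1) → Fin d → ℤ} {z : Fin d → Fin (d+1) → ℤ}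

lemma hBM (hz : ∀ j, ∑ i, z j i • v i = Pi.single j (1:ℤ)) (y : Fin d → ℝ) :
    Blin z (Mlin v y) = y := by
  funext j
  show ∑ i, (∑ k, (v i k : ℝ) * y k) * (z j i : ℝ) = y j
  have hswap : ∑ i, (∑ k, (v i k : ℝ) * y k) * (z j i : ℝ)
      = ∑ k, (∑ i, (z j i : ℝ) * (v i k : ℝ)) * y k := by
    simp only [Finset.sum_mul]
    rw [Finset.sum_comm]
    exact Finset.sum_congr rfl fun k _ => Finset.sum_congr rfl fun i _ => by ring
  rw [hswap]
  simp [hz_real hz]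

lemma hBA_aff (hz : ∀ j, ∑ i, z j i • v i = Pi.single j (1:ℤ)) (y : Fin d → ℝ) :
    Baff z (Aff v y) = y := by
  show Blin z ((Mlin v y + fun _ => 1) - fun _ => 1) = y
  have : (Mlin v y + fun _ => (1:ℝ)) - (fun _ => 1) = Mlin v y := by abel
  rw [this, hBM hz]

lemma hsur (hw : ∀ i, 0 < w i) (hrel : ∑ i, (w i : ℤ) • v i = 0)
    (hz : ∀ j, ∑ i, z j i • v i = Pi.single j (1:ℤ))
    (a : Fin (d+1) → ℝ) (ha : ∑ i, (w i : ℝ) * a i = 0) :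
    Mlin v (Blin z a) = a := by
  set Wf : (Fin (d+1) → ℝ) →ₗ[ℝ] ℝ :=
    { toFun := fun u => ∑ i, (w i : ℝ) * u i
      map_add' := fun a b => by simp [mul_add, Finset.sum_add_distrib]
      map_smul' := fun c a => by
        simp only [Pi.smul_apply, smul_eq_mul, RingHom.id_apply, Finset.mul_sum]
        exact Finset.sum_congr rfl fun i _ => by ring } with hWfdef
  have hwcoord : ∀ j, ∑ i, (w i : ℝ) * (v i j : ℝ) = 0 := by
    intro j
    have := congrFun hrel j
    have h2 : (∑ i, (w i : ℤ) * v i j : ℤ) = 0 := by simpa using this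
    exact_mod_cast congrArg (Int.cast : ℤ → ℝ) h2
  have hle : LinearMap.range (Mlin v) ≤ LinearMap.ker Wf := by
    rintro _ ⟨y, rfl⟩
    show ∑ i, (w i : ℝ) * (∑ j, (v i j : ℝ) * y j) = 0
    have hswap : ∑ i, (w i : ℝ) * (∑ j, (v i j : ℝ) * y j)
        = ∑ j, (∑ i, (w i : ℝ) * (v i j : ℝ)) * y j := by
      simp only [Finset.mul_sum, Finset.sum_mul]
      rw [Finset.sum_comm]
      exact Finset.sum_congr rfl fun j _ => Finset.sum_congr rfl fun i _ => by ring
    rw [hswap]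
    simp [hwcoord]
  have hinj : Function.Injective ⇑(Mlin v) := Function.LeftInverse.injective (hBM hz)
  have hrange : Module.finrank ℝ (LinearMap.range (Mlin v)) = d := by
    rw [LinearMap.finrank_range_of_inj hinj, Module.finrank_fin_fun]
  have hWpos : (0:ℝ) < ∑ i, (w i : ℝ) := by
    refine Finset.sum_pos (fun i _ => by exact_mod_cast hw i) ⟨0, Finset.mem_univ 0⟩
  have hWsur : LinearMap.range Wf = ⊤ := by
    rw [LinearMap.range_eq_top]
    intro c
    refine ⟨(fun _ => c / (∑ i, (w i : ℝ)) : Fin (d+1) → ℝ), ?_⟩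
    show ∑ i, (w i : ℝ) * (c / (∑ i, (w i : ℝ))) = c
    rw [← Finset.sum_mul]
    field_simp
  have hker : Module.finrank ℝ (LinearMap.ker Wf) = d := by
    have := LinearMap.finrank_range_add_finrank_ker Wf
    rw [hWsur, finrank_top, Module.finrank_self, Module.finrank_fin_fun] at this
    omega
  have heq : LinearMap.range (Mlin v) = LinearMap.ker Wf :=
    Submodule.eq_of_le_of_finrank_le hle (by rw [hker, hrange])
  have hmem : a ∈ LinearMap.range (Mlin v) := by
    rw [heq]
    exact ha
  obtain ⟨y, hy⟩ := hmem
  rw [← hy, hBM hz]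

end L3

section QP
variable {d : ℕ} {w : Fin (d+1) → ℕ} {v : Fin (d+1) → Fin d → ℤ} {z : Fin d → Fin (d+1) → ℤ}

lemma QP_eq (hw : ∀ i, 0 < w i) (hrel : ∑ i, (w i : ℤ) • v i = 0)
    (hz : ∀ j, ∑ i, z j i • v i = Pi.single j (1:ℤ)) :
    {x : Fin (d + 1) → ℝ | ∃ u : Fin (d + 1) → ℕ,
        (∀ i, x i = (u i : ℝ)) ∧ ∑ i, w i * u i = ∑ i, w i}
      = ⇑(Aff v) '' Pset v := by
  ext x
  constructor
  · rintro ⟨u, hxu, hsum⟩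
    set a : Fin (d+1) → ℤ := fun i => (u i : ℤ) - 1 with hadef
    have hwa : ∑ i, (w i : ℤ) * a i = 0 := by
      have hcast : (∑ i, (w i : ℤ) * (u i : ℤ)) = ∑ i, (w i : ℤ) := by
        exact_mod_cast congrArg (Nat.cast : ℕ → ℤ) hsum
      calc ∑ i, (w i : ℤ) * a i = ∑ i, ((w i : ℤ) * (u i : ℤ) - (w i : ℤ)) := by
            exact Finset.sum_congr rfl fun i _ => by rw [hadef]; ring
        _ = (∑ i, (w i : ℤ) * (u i : ℤ)) - ∑ i, (w i : ℤ) := Finset.sum_sub_distrib _ _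
        _ = 0 := by rw [hcast]; ring
    set nz : Fin d → ℤ := fun j => ∑ i, a i * z j i with hnzdef
    have hreal : Mlin v (Blin z (fun i => (a i : ℝ))) = (fun i => (a i : ℝ)) := by
      refine hsur hw hrel hz _ ?_
      have : ((∑ i, (w i : ℤ) * a i : ℤ) : ℝ) = 0 := by rw [hwa]; norm_num
      push_cast at this
      convert this using 2
    have hBlin_cast : Blin z (fun i => (a i : ℝ)) = fun j => (nz j : ℝ) := by
      funext j
      show ∑ i, (a i : ℝ) * (z j i : ℝ) = ((∑ i, a i * z j i : ℤ) : ℝ)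
      push_cast
      rfl
    have hdotn : ∀ i, ∑ j, v i j * nz j = a i := by
      intro i
      have h1 := congrFun hreal i
      rw [hBlin_cast] at h1
      have h2 : ∑ j, (v i j : ℝ) * (nz j : ℝ) = (a i : ℝ) := h1
      exact_mod_cast h2
    refine ⟨fun j => (nz j : ℝ), ⟨nz, fun j => rfl, fun i => by rw [hdotn i]; simp only [hadef]; omega⟩, ?_⟩
    funext i
    show (Mlin v (fun j => (nz j : ℝ))) i + 1 = x i
    have h3 : (Mlin v (fun j => (nz j : ℝ))) i = (a i : ℝ) := by
      rw [← hBlin_cast, congrFun hreal i]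
    rw [h3, hxu i, hadef]
    push_cast
    ring
  · rintro ⟨y, ⟨n, hyn, hni⟩, rfl⟩
    have hyeq : y = fun j => (n j : ℝ) := funext hyn
    refine ⟨fun i => ((∑ j, v i j * n j) + 1).toNat, ?_, ?_⟩
    · intro i
      show (Mlin v y) i + 1 = _
      rw [hyeq]
      have h1 : (Mlin v (fun j => (n j : ℝ))) i = ((∑ j, v i j * n j : ℤ) : ℝ) := by
        show ∑ j, (v i j : ℝ) * (n j : ℝ) = _
        push_cast
        rfl
      rw [h1]
      have h2 : (0:ℤ) ≤ (∑ j, v i j * n j) + 1 := by linarith [hni i]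
      have h3 : (((∑ j, v i j * n j) + 1).toNat : ℤ) = (∑ j, v i j * n j) + 1 :=
        Int.toNat_of_nonneg h2
      have h4 : ((((∑ j, v i j * n j) + 1).toNat : ℤ) : ℝ) = ((∑ j, v i j * n j : ℤ) : ℝ) + 1 := by
        rw [h3]; push_cast; ring
      push_cast at h4 ⊢
      linarith
    · have hZ : ∑ i, (w i : ℤ) * ((∑ j, v i j * n j) + 1) = ∑ i, (w i : ℤ) := by
        have : ∑ i, (w i : ℤ) * ((∑ j, v i j * n j) + 1)
            = (∑ i, (w i : ℤ) * (∑ j, v i j * n j)) + ∑ i, (w i : ℤ) := by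
          rw [← Finset.sum_add_distrib]
          exact Finset.sum_congr rfl fun i _ => by ring
        rw [this, wdot_sum hrel n, zero_add]
      have hcastgoal : ((∑ i, w i * ((∑ j, v i j * n j) + 1).toNat : ℕ) : ℤ)
          = ((∑ i, w i : ℕ) : ℤ) := by
        push_cast
        calc ∑ i, (w i : ℤ) * ((((∑ j, v i j * n j) + 1).toNat : ℤ))
            = ∑ i, (w i : ℤ) * ((∑ j, v i j * n j) + 1) := by
              refine Finset.sum_congr rfl fun i _ => ?_
              rw [Int.toNat_of_nonneg (by linarith [hni i])]
          _ = ∑ i, (w i : ℤ) := hZ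
      exact_mod_cast hcastgoal

end QP

/-- The weight vector `w̄` has the IP-property: the convex hull of all tuples
`(u_0,…,u_d)` of nonnegative integers with `Σ w_i u_i = w` is a `d`-dimensional polytope
containing `(1,…,1)` in its relative interior. -/
def HasIP {d : ℕ} (w : Fin (d + 1) → ℕ) : Prop :=
  Module.finrank ℝ (affineSpan ℝ (convexHull ℝ
      {x : Fin (d + 1) → ℝ | ∃ u : Fin (d + 1) → ℕ,
        (∀ i, x i = (u i : ℝ)) ∧ ∑ i, w i * u i = ∑ i, w i})).direction = d ∧
  (fun _ => (1 : ℝ)) ∈ intrinsicInterior ℝ (convexHull ℝ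
      {x : Fin (d + 1) → ℝ | ∃ u : Fin (d + 1) → ℕ,
        (∀ i, x i = (u i : ℝ)) ∧ ∑ i, w i * u i = ∑ i, w i})

section L3final
variable {d : ℕ} {w : Fin (d+1) → ℕ} {v : Fin (d+1) → Fin d → ℤ} {z : Fin d → Fin (d+1) → ℤ}

lemma h0P : (0 : Fin d → ℝ) ∈ Pset v :=
  ⟨0, fun j => by simp, fun i => by simp⟩

lemma L3 (hw : ∀ i, 0 < w i) (hrel : ∑ i, (w i : ℤ) • v i = 0)
    (hz : ∀ j, ∑ i, z j i • v i = Pi.single j (1:ℤ)) :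
    (0 : Fin d → ℝ) ∈ interior (convexHull ℝ (Pset v)) ↔ HasIP w := by
  have hBA := hBA_aff (v := v) hz
  have hinj : Function.Injective ⇑(Aff v) := Function.LeftInverse.injective hBA
  have hMinj : Function.Injective ⇑(Mlin v) := Function.LeftInverse.injective (hBM hz)
  set T := convexHull ℝ (Pset v) with hTdef
  have hQ : convexHull ℝ {x : Fin (d + 1) → ℝ | ∃ u : Fin (d + 1) → ℕ,
        (∀ i, x i = (u i : ℝ)) ∧ ∑ i, w i * u i = ∑ i, w i} = ⇑(Aff v) '' T := by
    rw [QP_eq hw hrel hz]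
    exact (AffineMap.image_convexHull (Aff v) (Pset v)).symm
  have hA0 : Aff v 0 = (fun _ : Fin (d+1) => (1:ℝ)) := by
    show Mlin v 0 + (fun _ => (1:ℝ)) = _
    rw [map_zero]
    funext i
    simp
  unfold HasIP
  rw [hQ]
  constructor
  · intro h0
    have haff : affineSpan ℝ T = ⊤ :=
      (convex_convexHull ℝ (Pset v)).interior_nonempty_iff_affineSpan_eq_top.1 ⟨0, h0⟩
    constructor
    · rw [← AffineSubspace.map_span, haff, AffineSubspace.map_direction,
        AffineSubspace.direction_top, Submodule.map_top]
      have hlin : (Aff v).linear = Mlin v := rfl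
      rw [hlin, LinearMap.finrank_range_of_inj hMinj, Module.finrank_fin_fun]
    · rw [intrinsic_image (Aff v) (Baff z) hBA T haff]
      exact ⟨0, h0, hA0⟩
  · rintro ⟨hfin, hint⟩
    rw [← AffineSubspace.map_span, AffineSubspace.map_direction] at hfin
    have hlin : (Aff v).linear = Mlin v := rfl
    rw [hlin] at hfin
    have hfr : Module.finrank ℝ (affineSpan ℝ T).direction = d := by
      rw [(Submodule.equivMapOfInjective (Mlin v) hMinj
        (affineSpan ℝ T).direction).finrank_eq]
      exact hfin
    have hdirtop : (affineSpan ℝ T).direction = ⊤ :=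
      Submodule.eq_top_of_finrank_eq (by rw [hfr, Module.finrank_fin_fun])
    have haff : affineSpan ℝ T = ⊤ :=
      affineSpan_eq_top_of_direction ⟨0, subset_convexHull ℝ _ h0P⟩ hdirtop
    rw [intrinsic_image (Aff v) (Baff z) hBA T haff] at hint
    obtain ⟨y, hy, hAy⟩ := hint
    have hy0 : y = 0 := hinj (by rw [hAy, hA0])
    rwa [hy0] at hy

end L3final

/-- Let `w̄` be a weight vector and `v_0,…,v_d ∈ ℤ^d` generate `ℤ^d` and
satisfy `Σ w_i v_i = 0`; set `Δ*_{w̄} = conv(v_0,…,v_d)`. Then the Fine interior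
`F(Δ*_{w̄})` equals `{0}` if and only if `w̄` has the IP-property. -/
theorem stmt_3 (d : ℕ) (w : Fin (d + 1) → ℕ) (hw : ∀ i, 0 < w i)
    (v : Fin (d + 1) → (Fin d → ℤ))
    (hgen : AddSubgroup.closure (Set.range v) = ⊤)
    (hrel : ∑ i, (w i : ℤ) • v i = 0) :
    fineInterior (convexHull ℝ (Set.range fun i => fun j => ((v i j : ℤ) : ℝ))) = {0} ↔
      HasIP w := by
  have hzs : ∀ j : Fin d, ∃ c : Fin (d+1) → ℤ, ∑ i, c i • v i = Pi.single j (1:ℤ) := by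
    intro j
    have hmem : (Pi.single j 1 : Fin d → ℤ) ∈ AddSubgroup.closure (Set.range v) := by
      rw [hgen]; trivial
    have hmem2 : (Pi.single j 1 : Fin d → ℤ) ∈ Submodule.span ℤ (Set.range v) := by
      rwa [← Submodule.span_int_eq_addSubgroupClosure, Submodule.mem_toAddSubgroup] at hmem
    exact (Submodule.mem_span_range_iff_exists_fun ℤ).1 hmem2
  choose z hz using hzs
  have hrange : (Set.range fun i => fun j => ((v i j : ℤ) : ℝ)) = Set.range (Vr v) := rfl
  rw [hrange, L1 hw hrel hz, L2 (Pset v) h0P, L3 hw hrel hz]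
end L2
end

section
/- Let w̄ = (w_0,…,w_d) be a weight vector, w := Σ_i w_i, q_i := w_i/w, and let l be an integer; set S := {i ∈ {0,…,d} : θ̃_i(l) = 0}. Then for all real numbers u, v > 0 with uv ≠ 1, the following identity of real numbers holds (all powers being real powers of positive reals): ∏_{i∈S} (1−(uv)^{1−q_i})/(1−(uv)^{q_i}) · ∏_{i∉S} (uv)^{1/2−q_i}·(u/v)^{θ̃_i(l)−1/2} = (uv)^{−1} · ∏_{i∈S} ((uv)^{q_i}−uv)/(1−(uv)^{q_i}) · v^{size(l)} · (u/v)^{age(l)}. (This is the identity of the l-th summand underlying Proposition 5.1, which rewrites the summands of Vafa's orbifold Poincaré polynomial Q(u,v); note Σ_i q_i = 1 is used.) -/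
open scoped Classical

/-- `q_i = w_i / w`. -/
noncomputable def qwt {d : ℕ} (w : Fin (d + 1) → ℕ) (i : Fin (d + 1)) : ℝ :=
  (w i : ℝ) / ((∑ j, w j : ℕ) : ℝ)

/-- `θ̃_i(l)`, the fractional part of `l·q_i`. -/
noncomputable def thetaT {d : ℕ} (w : Fin (d + 1) → ℕ) (l : ℤ) (i : Fin (d + 1)) : ℝ :=
  Int.fract ((l : ℝ) * qwt w i)

/-- `age(l) = Σ_i θ̃_i(l)`. -/
noncomputable def ageW {d : ℕ} (w : Fin (d + 1) → ℕ) (l : ℤ) : ℝ :=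
  ∑ i, thetaT w l i

/-- `size(l) = #{i : θ̃_i(l) ≠ 0}`. -/
noncomputable def sizeW {d : ℕ} (w : Fin (d + 1) → ℕ) (l : ℤ) : ℕ :=
  (Finset.univ.filter fun i => thetaT w l i ≠ 0).card

lemma rpow_sum' {α : Type*} (s : Finset α) (x : ℝ) (hx : 0 < x) (f : α → ℝ) :
    x ^ (∑ i ∈ s, f i) = ∏ i ∈ s, x ^ f i := by
  induction s using Finset.cons_induction with
  | empty => simp
  | cons a s ha ih => rw [Finset.sum_cons, Finset.prod_cons, Real.rpow_add hx, ih]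

/-- for all reals `u, v > 0` with `uv ≠ 1`, with
`S = {i : θ̃_i(l) = 0}`:
`∏_{i∈S} (1−(uv)^{1−q_i})/(1−(uv)^{q_i}) · ∏_{i∉S} (uv)^{1/2−q_i}·(u/v)^{θ̃_i(l)−1/2}
 = (uv)^{−1} · ∏_{i∈S} ((uv)^{q_i}−uv)/(1−(uv)^{q_i}) · v^{size(l)} · (u/v)^{age(l)}`. -/
theorem stmt_4 {d : ℕ} (w : Fin (d + 1) → ℕ) (hw : ∀ i, 0 < w i) (l : ℤ)
    (u v : ℝ) (hu : 0 < u) (hv : 0 < v) (huv : u * v ≠ 1) :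
    (∏ i ∈ Finset.univ.filter fun i => thetaT w l i = 0,
        (1 - (u * v) ^ (1 - qwt w i)) / (1 - (u * v) ^ qwt w i)) *
      ∏ i ∈ (Finset.univ.filter fun i => thetaT w l i = 0)ᶜ,
        (u * v) ^ ((1 : ℝ) / 2 - qwt w i) * (u / v) ^ (thetaT w l i - 1 / 2) =
    (u * v)⁻¹ *
      (∏ i ∈ Finset.univ.filter fun i => thetaT w l i = 0,
        ((u * v) ^ qwt w i - u * v) / (1 - (u * v) ^ qwt w i)) *
      v ^ (sizeW w l) * (u / v) ^ ageW w l := by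
  set x := u * v with hxdef
  set y := u / v with hydef
  have hx : 0 < x := mul_pos hu hv
  have hy : 0 < y := div_pos hu hv
  set S := Finset.univ.filter fun i => thetaT w l i = 0 with hSdef
  -- sum of q's is 1
  have hWpos : 0 < ((∑ j, w j : ℕ) : ℝ) := by
    have : 0 < ∑ j, w j := Finset.sum_pos (fun i _ => hw i) ⟨0, Finset.mem_univ 0⟩
    exact_mod_cast this
  have hq1 : ∑ i, qwt w i = 1 := by
    unfold qwt
    rw [← Finset.sum_div]
    rw [show (∑ i, ((w i : ℝ))) = (((∑ j, w j : ℕ)) : ℝ) by push_cast; ring]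
    exact div_self hWpos.ne'
  -- rewrite S-product factors
  have hSfac : ∀ i ∈ S, (1 - x ^ (1 - qwt w i)) / (1 - x ^ qwt w i)
      = x ^ (-qwt w i) * ((x ^ qwt w i - x) / (1 - x ^ qwt w i)) := by
    intro i _
    set q := qwt w i
    have ht : (0:ℝ) < x ^ q := Real.rpow_pos_of_pos hx q
    have h1 : 1 - x ^ (1 - q) = x ^ (-q) * (x ^ q - x) := by
      rw [show (1:ℝ) - q = 1 + (-q) by ring, Real.rpow_add hx, Real.rpow_one,
        Real.rpow_neg hx.le]
      field_simp
    rw [h1, mul_div_assoc]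
  -- rewrite Sᶜ-product factors
  have hxy : x ^ ((1:ℝ)/2) * y ^ (-(1:ℝ)/2) = v := by
    rw [show (-(1:ℝ)/2) = -(1/2) by ring, Real.rpow_neg hy.le, mul_comm,
      inv_mul_eq_div, ← Real.div_rpow hx.le hy.le]
    have : x / y = v ^ (2:ℕ) := by
      field_simp [hxdef, hydef]
      rw [hxdef, hydef, div_mul_eq_mul_div, eq_div_iff hv.ne']
      ring
    rw [this, ← Real.rpow_natCast v 2, ← Real.rpow_mul hv.le]
    norm_num
  have hCfac : ∀ i ∈ Sᶜ, x ^ ((1:ℝ)/2 - qwt w i) * y ^ (thetaT w l i - 1/2)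
      = x ^ (-qwt w i) * (v * y ^ (thetaT w l i)) := by
    intro i _
    rw [show (1:ℝ)/2 - qwt w i = -qwt w i + 1/2 by ring,
      show thetaT w l i - 1/2 = thetaT w l i + (-(1:ℝ)/2) by ring,
      Real.rpow_add hx, Real.rpow_add hy]
    rw [← hxy]
    ring
  rw [Finset.prod_congr rfl hSfac, Finset.prod_congr rfl hCfac,
    Finset.prod_mul_distrib, Finset.prod_mul_distrib, Finset.prod_mul_distrib,
    ← rpow_sum' _ x hx, ← rpow_sum' _ x hx, Finset.prod_const]
  -- age and size identifications
  have hage : ∑ i ∈ Sᶜ, thetaT w l i = ageW w l := by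
    unfold ageW
    rw [← Finset.sum_add_sum_compl S (thetaT w l)]
    have : ∑ i ∈ S, thetaT w l i = 0 := by
      apply Finset.sum_eq_zero
      intro i hi
      exact (Finset.mem_filter.mp hi).2
    rw [this, zero_add]
  have hsize : Sᶜ.card = sizeW w l := by
    unfold sizeW
    congr 1
    rw [hSdef, Finset.compl_filter]
  rw [← rpow_sum' _ y hy, hage, hsize]
  have hsum : ∑ i ∈ S, -qwt w i + ∑ i ∈ Sᶜ, -qwt w i = -1 := by
    rw [Finset.sum_add_sum_compl S (fun i => -qwt w i)]
    simp [hq1]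
  have hxinv : x ^ (∑ i ∈ S, -qwt w i) * x ^ (∑ i ∈ Sᶜ, -qwt w i) = x⁻¹ := by
    rw [← Real.rpow_add hx, hsum, Real.rpow_neg_one]
  rw [← hxinv]
  ring
end
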